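/- arXiv:2502.17106 — 11 statements merged into one kernel-verified Lean document; each statement's English description precedes it below -/
import Mathlib

section
/- For all integers m and n, the multisets {±(2m+2n), ±(−nm−n−m+3), ±(nm−n−m−3)} and {±(2n−2m), ±(nm−n+m+3), ±(−nm−n+m−3)} have equal power sums of order k for every k with 1 ≤ k ≤ 5. -/
/-- Borwein's parametric ideal solution of degree 5 of the one-dimensional PTE problem. -/
theorem borwein_pte_solution (m n : ℤ) (k : ℕ) (hk1 : 1 ≤ k) (hk5 : k ≤ 5) :
    (([2*m + 2*n, -(n*m) - n - m + 3, n*m - n - m - 3,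
       -(2*m + 2*n), -(-(n*m) - n - m + 3), -(n*m - n - m - 3)] : List ℤ).map
      (fun x => x ^ k)).sum =
    (([2*n - 2*m, n*m - n + m + 3, -(n*m) - n + m - 3,
       -(2*n - 2*m), -(n*m - n + m + 3), -(-(n*m) - n + m - 3)] : List ℤ).map
      (fun x => x ^ k)).sum := by
  interval_cases k <;> simp <;> ring
end

section
/- For all integers a and b, the multisets X = {(0,0),(2a+b,b),(3a+b,3a+3b),(2a,6a+4b),(−b,6a+3b),(−a−b,3a+b)} and Y = {(2a,0),(3a+b,3a+b),(2a+b,6a+3b),(0,6a+4b),(−a−b,3a+3b),(−b,b)} in ℤ² satisfy ∑_{(x,y)∈X} x^{k₁} y^{k₂} = ∑_{(x,y)∈Y} x^{k₁} y^{k₂} for all nonnegative integers k₁, k₂ with 1 ≤ k₁+k₂ ≤ 5. -/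
/-- The Alpers–Tijdeman ideal solution of degree 5 of the two-dimensional PTE problem. -/
theorem alpers_tijdeman_solution (a b : ℤ) (k₁ k₂ : ℕ)
    (h1 : 1 ≤ k₁ + k₂) (h5 : k₁ + k₂ ≤ 5) :
    (([((0:ℤ),(0:ℤ)), (2*a + b, b), (3*a + b, 3*a + 3*b), (2*a, 6*a + 4*b),
       (-b, 6*a + 3*b), (-a - b, 3*a + b)] : List (ℤ × ℤ)).map
      (fun p => p.1 ^ k₁ * p.2 ^ k₂)).sum =
    (([((2*a:ℤ),(0:ℤ)), (3*a + b, 3*a + b), (2*a + b, 6*a + 3*b), (0, 6*a + 4*b),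
       (-a - b, 3*a + 3*b), (-b, b)] : List (ℤ × ℤ)).map
      (fun p => p.1 ^ k₁ * p.2 ^ k₂)).sum := by
  have hk1 : k₁ ≤ 5 := le_trans (Nat.le_add_right _ _) h5
  have hk2 : k₂ ≤ 5 := le_trans (Nat.le_add_left _ _) h5
  interval_cases k₁ <;> interval_cases k₂ <;> simp_all <;> ring
end

section
/- For all integers m and n, the two multisets of points in ℤ², X = {±(2(n+m), −nm−n−m+3), ±(−nm−n−m+3, nm−n−m−3), ±(nm−n−m−3, 2(n+m))} and Y = {±(2(n−m), nm−n+m+3), ±(nm−n+m+3, −nm−n+m−3), ±(−nm−n+m−3, 2(n−m))}, satisfy ∑_{(x,y)∈X} x^{k₁} y^{k₂} = ∑_{(x,y)∈Y} x^{k₁} y^{k₂} for all nonnegative integers k₁, k₂ with 1 ≤ k₁+k₂ ≤ 5. -/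
set_option maxHeartbeats 1600000 in
/-- The two-dimensional Borwein solution of the two-dimensional PTE problem. -/
theorem two_dim_borwein_solution (m n : ℤ) (k₁ k₂ : ℕ)
    (h1 : 1 ≤ k₁ + k₂) (h5 : k₁ + k₂ ≤ 5) :
    (([(2*(n + m), -(n*m) - n - m + 3),
       (-(n*m) - n - m + 3, n*m - n - m - 3),
       (n*m - n - m - 3, 2*(n + m)),
       (-(2*(n + m)), -(-(n*m) - n - m + 3)),
       (-(-(n*m) - n - m + 3), -(n*m - n - m - 3)),
       (-(n*m - n - m - 3), -(2*(n + m)))] : List (ℤ × ℤ)).map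
      (fun p => p.1 ^ k₁ * p.2 ^ k₂)).sum =
    (([(2*(n - m), n*m - n + m + 3),
       (n*m - n + m + 3, -(n*m) - n + m - 3),
       (-(n*m) - n + m - 3, 2*(n - m)),
       (-(2*(n - m)), -(n*m - n + m + 3)),
       (-(n*m - n + m + 3), -(-(n*m) - n + m - 3)),
       (-(-(n*m) - n + m - 3), -(2*(n - m)))] : List (ℤ × ℤ)).map
      (fun p => p.1 ^ k₁ * p.2 ^ k₂)).sum := by
  have hk1 : k₁ ≤ 5 := by omega
  have hk2 : k₂ ≤ 5 := by omega
  interval_cases k₁ <;> interval_cases k₂ <;> first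
    | (exfalso; omega)
    | (simp only [List.map_cons, List.map_nil, List.sum_cons, List.sum_nil]; ring)
end

section
/- For all rational numbers t₁ and t₂, the two multisets of 6 points in ℚ², X(t₁) and X(t₂), where X(t) = {±((2t+1)/(t²+t+1), (t²−1)/(t²+t+1)), ±((t²−1)/(t²+t+1), −t(t+2)/(t²+t+1)), ±(−t(t+2)/(t²+t+1), (2t+1)/(t²+t+1))}, satisfy ∑_{(x,y)∈X(t₁)} x^{k₁} y^{k₂} = ∑_{(x,y)∈X(t₂)} x^{k₁} y^{k₂} for all nonnegative integers k₁, k₂ with 1 ≤ k₁+k₂ ≤ 5. -/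
set_option maxHeartbeats 2000000

private def cval (k₁ k₂ : ℕ) : ℚ :=
  match k₁, k₂ with
  | 0, 2 => 4 | 0, 4 => 4 | 2, 0 => 4 | 4, 0 => 4
  | 1, 1 => -2 | 1, 3 => -2 | 3, 1 => -2 | 2, 2 => 2
  | _, _ => 0

private lemma key (t : ℚ) (k₁ k₂ : ℕ) (h1 : 1 ≤ k₁ + k₂) (h5 : k₁ + k₂ ≤ 5) :
    (([((2*t + 1)/(t^2 + t + 1), (t^2 - 1)/(t^2 + t + 1)),
          ((t^2 - 1)/(t^2 + t + 1), -(t*(t + 2))/(t^2 + t + 1)),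
          (-(t*(t + 2))/(t^2 + t + 1), (2*t + 1)/(t^2 + t + 1)),
          (-((2*t + 1)/(t^2 + t + 1)), -((t^2 - 1)/(t^2 + t + 1))),
          (-((t^2 - 1)/(t^2 + t + 1)), -(-(t*(t + 2))/(t^2 + t + 1))),
          (-(-(t*(t + 2))/(t^2 + t + 1)), -((2*t + 1)/(t^2 + t + 1)))] :
         List (ℚ × ℚ)).map
      (fun p => p.1 ^ k₁ * p.2 ^ k₂)).sum = cval k₁ k₂ := by
  have ht : t^2 + t + 1 ≠ 0 := by nlinarith [sq_nonneg (2*t+1)]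
  have ht' : t * (t + 1) + 1 ≠ 0 := by nlinarith [sq_nonneg (2*t+1)]
  have hk1 : k₁ ≤ 5 := by omega
  have hk2 : k₂ ≤ 5 := by omega
  interval_cases k₁ <;> interval_cases k₂ <;>
    first
      | omega
      | (simp only [List.map, List.sum_cons, List.sum_nil, cval]
         field_simp
         ring)

/-- A parametric rational ideal solution of degree 5 of the two-dimensional PTE problem. -/
theorem rational_two_dim_pte_solution (t₁ t₂ : ℚ) (k₁ k₂ : ℕ)
    (h1 : 1 ≤ k₁ + k₂) (h5 : k₁ + k₂ ≤ 5) :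
    (((fun t : ℚ =>
        ([((2*t + 1)/(t^2 + t + 1), (t^2 - 1)/(t^2 + t + 1)),
          ((t^2 - 1)/(t^2 + t + 1), -(t*(t + 2))/(t^2 + t + 1)),
          (-(t*(t + 2))/(t^2 + t + 1), (2*t + 1)/(t^2 + t + 1)),
          (-((2*t + 1)/(t^2 + t + 1)), -((t^2 - 1)/(t^2 + t + 1))),
          (-((t^2 - 1)/(t^2 + t + 1)), -(-(t*(t + 2))/(t^2 + t + 1))),
          (-(-(t*(t + 2))/(t^2 + t + 1)), -((2*t + 1)/(t^2 + t + 1)))] :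
         List (ℚ × ℚ))) t₁).map
      (fun p => p.1 ^ k₁ * p.2 ^ k₂)).sum =
    (((fun t : ℚ =>
        ([((2*t + 1)/(t^2 + t + 1), (t^2 - 1)/(t^2 + t + 1)),
          ((t^2 - 1)/(t^2 + t + 1), -(t*(t + 2))/(t^2 + t + 1)),
          (-(t*(t + 2))/(t^2 + t + 1), (2*t + 1)/(t^2 + t + 1)),
          (-((2*t + 1)/(t^2 + t + 1)), -((t^2 - 1)/(t^2 + t + 1))),
          (-((t^2 - 1)/(t^2 + t + 1)), -(-(t*(t + 2))/(t^2 + t + 1))),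
          (-(-(t*(t + 2))/(t^2 + t + 1)), -((2*t + 1)/(t^2 + t + 1)))] :
         List (ℚ × ℚ))) t₂).map
      (fun p => p.1 ^ k₁ * p.2 ^ k₂)).sum := by
  rw [key t₁ k₁ k₂ h1 h5, key t₂ k₁ k₂ h1 h5]
end

section
/- For all rational numbers t₁ and t₂, the multisets {±(2t₁+1)/(t₁²+t₁+1), ±(t₁²−1)/(t₁²+t₁+1), ±t₁(t₁+2)/(t₁²+t₁+1)} and {±(2t₂+1)/(t₂²+t₂+1), ±(t₂²−1)/(t₂²+t₂+1), ±t₂(t₂+2)/(t₂²+t₂+1)} have equal k-th power sums for every k with 1 ≤ k ≤ 5. -/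
lemma denom_ne (t : ℚ) : t^2 + t + 1 ≠ 0 := by nlinarith [sq_nonneg (2*t+1)]

/-- A parametric rational ideal solution of degree 5 of the one-dimensional PTE problem. -/
theorem rational_pte_solution (t₁ t₂ : ℚ) (k : ℕ) (hk1 : 1 ≤ k) (hk5 : k ≤ 5) :
    (([(2*t₁ + 1)/(t₁^2 + t₁ + 1), (t₁^2 - 1)/(t₁^2 + t₁ + 1),
       t₁*(t₁ + 2)/(t₁^2 + t₁ + 1),
       -((2*t₁ + 1)/(t₁^2 + t₁ + 1)), -((t₁^2 - 1)/(t₁^2 + t₁ + 1)),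
       -(t₁*(t₁ + 2)/(t₁^2 + t₁ + 1))] : List ℚ).map
      (fun x => x ^ k)).sum =
    (([(2*t₂ + 1)/(t₂^2 + t₂ + 1), (t₂^2 - 1)/(t₂^2 + t₂ + 1),
       t₂*(t₂ + 2)/(t₂^2 + t₂ + 1),
       -((2*t₂ + 1)/(t₂^2 + t₂ + 1)), -((t₂^2 - 1)/(t₂^2 + t₂ + 1)),
       -(t₂*(t₂ + 2)/(t₂^2 + t₂ + 1))] : List ℚ).map
      (fun x => x ^ k)).sum := by
  have h1 := denom_ne t₁
  have h2 := denom_ne t₂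
  have h1' : t₁ * (t₁ + 1) + 1 ≠ 0 := by convert h1 using 1; ring
  have h2' : t₂ * (t₂ + 1) + 1 ≠ 0 := by convert h2 using 1; ring
  interval_cases k <;> simp only [List.map, List.sum_cons, List.sum_nil] <;>
    field_simp <;> ring
end

section
/- For all integers (or rationals) m, n, the multisets {±(−5m²+4mn−3n²), ±(−3m²+6mn+5n²), ±(−m²−10mn−n²)} and {±(−5m²+6mn+3n²), ±(−3m²−4mn−5n²), ±(−m²+10mn−n²)} have equal k-th power sums for every k with 1 ≤ k ≤ 5. -/
/-- Chernick's parametric ideal solution of degree 5 of the one-dimensional PTE problem. -/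
theorem chernick_pte_solution (m n : ℤ) (k : ℕ) (hk1 : 1 ≤ k) (hk5 : k ≤ 5) :
    (([-5*m^2 + 4*m*n - 3*n^2, -3*m^2 + 6*m*n + 5*n^2, -m^2 - 10*m*n - n^2,
       -(-5*m^2 + 4*m*n - 3*n^2), -(-3*m^2 + 6*m*n + 5*n^2),
       -(-m^2 - 10*m*n - n^2)] : List ℤ).map (fun x => x ^ k)).sum =
    (([-5*m^2 + 6*m*n + 3*n^2, -3*m^2 - 4*m*n - 5*n^2, -m^2 + 10*m*n - n^2,
       -(-5*m^2 + 6*m*n + 3*n^2), -(-3*m^2 - 4*m*n - 5*n^2),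
       -(-m^2 + 10*m*n - n^2)] : List ℤ).map (fun x => x ^ k)).sum := by
  interval_cases k <;> simp [List.sum_cons] <;> ring
end

section
/- The curve C : y² = 14(5x²+2x+1)(x²−2x+5) has no points with both coordinates in ℚ. -/
/-- The curve `y² = 14(5x²+2x+1)(x²−2x+5)` has no rational points. -/

theorem no_rational_points_on_curve (x y : ℚ) :
    y ^ 2 ≠ 14 * (5*x^2 + 2*x + 1) * (x^2 - 2*x + 5) := by
  intro h
  set p : ℤ := x.num with hp
  set q : ℤ := (x.den : ℤ) with hq
  have hxd : x * (x.den : ℚ) = (p : ℚ) := Rat.mul_den_eq_num x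
  set A : ℤ := 5*p^2 + 2*p*q + q^2 with hA
  set B : ℤ := p^2 - 2*p*q + 5*q^2 with hB
  have key : (y * (x.den : ℚ)^2)^2 = ((14 * A * B : ℤ) : ℚ) := by
    push_cast [hA, hB, hq]
    rw [← hxd]
    linear_combination ((x.den : ℚ))^4 * h
  -- y * den^2 is an integer
  have hden : (y * (x.den : ℚ)^2).den = 1 := by
    have h2 : ((y * (x.den : ℚ)^2)^2).den = 1 := by rw [key]; exact Rat.den_intCast _
    rw [Rat.den_pow] at h2
    exact (pow_eq_one_iff.mp h2).resolve_right (by norm_num)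
  set r : ℚ := y * (x.den : ℚ)^2 with hr
  have hz : (r.num : ℚ) = r := (Rat.den_eq_one_iff r).mp hden
  set z : ℤ := r.num with hzdef
  have hzz : z^2 = 14 * A * B := by
    have : ((z^2 : ℤ) : ℚ) = ((14 * A * B : ℤ) : ℚ) := by
      rw [Int.cast_pow, hz]; exact key
    exact_mod_cast this
  -- coprimality
  have hcop : Int.gcd p q = 1 := x.reduced
  have h7 : ∀ a b : ZMod 7, 5*a^2+2*a*b+b^2 = 0 → a = 0 ∧ b = 0 := by decide
  have h7' : ∀ a b : ZMod 7, a^2-2*a*b+5*b^2 = 0 → a = 0 ∧ b = 0 := by decide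
  have hnA : ¬ (7:ℤ) ∣ A := by
    intro hd
    have hz7 : ((A : ℤ) : ZMod 7) = 0 := (ZMod.intCast_zmod_eq_zero_iff_dvd _ 7).mpr hd
    push_cast [hA] at hz7
    obtain ⟨h1, h2⟩ := h7 (p : ZMod 7) (q : ZMod 7) hz7
    have d1 : (7:ℤ) ∣ p := (ZMod.intCast_zmod_eq_zero_iff_dvd _ 7).mp h1
    have d2 : (7:ℤ) ∣ q := (ZMod.intCast_zmod_eq_zero_iff_dvd _ 7).mp h2
    have : (7:ℤ) ∣ (Int.gcd p q : ℤ) := Int.dvd_coe_gcd d1 d2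
    rw [hcop] at this
    norm_num at this
  have hnB : ¬ (7:ℤ) ∣ B := by
    intro hd
    have hz7 : ((B : ℤ) : ZMod 7) = 0 := (ZMod.intCast_zmod_eq_zero_iff_dvd _ 7).mpr hd
    push_cast [hB] at hz7
    obtain ⟨h1, h2⟩ := h7' (p : ZMod 7) (q : ZMod 7) hz7
    have d1 : (7:ℤ) ∣ p := (ZMod.intCast_zmod_eq_zero_iff_dvd _ 7).mp h1
    have d2 : (7:ℤ) ∣ q := (ZMod.intCast_zmod_eq_zero_iff_dvd _ 7).mp h2
    have : (7:ℤ) ∣ (Int.gcd p q : ℤ) := Int.dvd_coe_gcd d1 d2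
    rw [hcop] at this
    norm_num at this
  have hp7 : Prime (7:ℤ) := by norm_num
  have h7z : (7:ℤ) ∣ z := by
    apply hp7.dvd_of_dvd_pow (n := 2)
    rw [hzz]
    exact ⟨2*A*B, by ring⟩
  obtain ⟨w, hw⟩ := h7z
  have h2ab : (7:ℤ) ∣ 2*A*B := by
    refine ⟨w^2, ?_⟩
    have h49 : (7:ℤ) * (2*A*B) = 7 * (7*w^2) := by linear_combination -hzz + (z+7*w)*hw
    exact (mul_left_cancel₀ (by norm_num : (7:ℤ) ≠ 0) h49)
  rcases (hp7.dvd_mul.mp h2ab) with hab | hb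
  · rcases hp7.dvd_mul.mp hab with h2 | ha
    · norm_num at h2
    · exact hnA ha
  · exact hnB hb
end

section
/- There is no rational number A with 14·A²·(5m²+2mn+n²)(m²−2mn+5n²) = 4 for any rationals m, n not both zero. -/
private lemma zmod7_c : ∀ z : ZMod 7, 2 * z ^ 2 = 0 → z = 0 := by decide
private lemma zmod7_ab : ∀ x y : ZMod 7, x ^ 2 + y ^ 2 = 0 → x = 0 ∧ y = 0 := by decide

private lemma descent : ∀ N : ℕ, ∀ a b c : ℤ, c.natAbs = N →
    7 * (a ^ 2 + b ^ 2) = 2 * c ^ 2 → c = 0 := by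
  intro N
  induction N using Nat.strong_induction_on with
  | _ N ih =>
    intro a b c hN h
    by_contra hc
    -- 7 ∣ c
    have h7c : (7 : ℤ) ∣ c := by
      have : ((c : ZMod 7)) = 0 := by
        apply zmod7_c
        have := congrArg (Int.cast : ℤ → ZMod 7) h
        push_cast at this
        have h70 : (7 : ZMod 7) = 0 := by decide
        linear_combination -this + ((a : ZMod 7) ^ 2 + (b : ZMod 7) ^ 2) * h70
      exact_mod_cast (ZMod.intCast_zmod_eq_zero_iff_dvd c 7).mp this
    obtain ⟨d, rfl⟩ := h7c
    have h2 : a ^ 2 + b ^ 2 = 14 * d ^ 2 := by linarith [h]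
    have hab : (7 : ℤ) ∣ a ∧ (7 : ℤ) ∣ b := by
      have h0 : ((a : ZMod 7)) ^ 2 + ((b : ZMod 7)) ^ 2 = 0 := by
        have := congrArg (Int.cast : ℤ → ZMod 7) h2
        push_cast at this
        have h70 : (7 : ZMod 7) = 0 := by decide
        linear_combination this + 2 * (d : ZMod 7) ^ 2 * h70
      obtain ⟨ha, hb⟩ := zmod7_ab _ _ h0
      exact ⟨(ZMod.intCast_zmod_eq_zero_iff_dvd a 7).mp (by exact_mod_cast ha),
        (ZMod.intCast_zmod_eq_zero_iff_dvd b 7).mp (by exact_mod_cast hb)⟩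
    obtain ⟨⟨a', rfl⟩, ⟨b', rfl⟩⟩ := hab
    have h3 : 7 * (a' ^ 2 + b' ^ 2) = 2 * d ^ 2 := by linarith [h2]
    have hd0 : d ≠ 0 := fun hd => hc (by rw [hd, mul_zero])
    have hlt : d.natAbs < N := by
      rw [← hN]
      have h3 : (7 * d).natAbs = 7 * d.natAbs := by
        rw [Int.natAbs_mul]; norm_num
      have h1 : d.natAbs ≠ 0 := Int.natAbs_ne_zero.mpr hd0
      rw [h3]; omega
    exact hd0 (ih d.natAbs hlt a' b' d rfl h3)

/-- There is no rational `A` with `14A²(5m²+2mn+n²)(m²−2mn+5n²) = 4`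
for rationals `m`, `n` not both zero. -/
theorem no_rational_scaling (A m n : ℚ) (hmn : m ≠ 0 ∨ n ≠ 0) :
    14 * A^2 * (5*m^2 + 2*m*n + n^2) * (m^2 - 2*m*n + 5*n^2) ≠ 4 := by
  intro h
  -- Brahmagupta: the product is a sum of two squares
  set x : ℚ := A * ((m + n) * (m - n) + 4 * m * n) with hx
  set y : ℚ := A * (2 * n * (m + n) - 2 * m * (m - n)) with hy
  have key : 7 * (x ^ 2 + y ^ 2) = 2 := by
    rw [hx, hy]; ring_nf; ring_nf at h; linarith
  -- clear denominators
  set a : ℤ := x.num * (y.den : ℤ) with ha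
  set b : ℤ := y.num * (x.den : ℤ) with hb
  set c : ℤ := (x.den : ℤ) * (y.den : ℤ) with hc
  have hcne : (c : ℚ) ≠ 0 := by
    rw [hc]
    push_cast
    positivity
  have hxd : x * (x.den : ℚ) = x.num := by
    rw [Rat.mul_den_eq_num]
  have hyd : y * (y.den : ℚ) = y.num := by
    rw [Rat.mul_den_eq_num]
  have hxq : (a : ℚ) = x * c := by
    rw [ha, hc]; push_cast; rw [← hxd]; ring
  have hyq : (b : ℚ) = y * c := by
    rw [hb, hc]; push_cast; rw [← hyd]; ring
  have hq : (7 : ℚ) * ((a:ℚ) ^ 2 + (b:ℚ) ^ 2) = 2 * (c:ℚ) ^ 2 := by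
    rw [hxq, hyq]; linear_combination (c:ℚ)^2 * key
  have hz : (7 : ℤ) * (a ^ 2 + b ^ 2) = 2 * c ^ 2 := by exact_mod_cast hq
  have : c = 0 := descent c.natAbs a b c rfl hz
  exact hcne (by exact_mod_cast congrArg (Int.cast : ℤ → ℚ) this)
end

section
/- If a disjoint pair of multisets {a₁,…,a_m} and {b₁,…,b_m} of integers satisfies ∑ a_i^k = ∑ b_i^k for all 1 ≤ k ≤ n, then m ≥ n+1. -/
open Multiset Polynomial

/-- Newton's identity for multisets over ℚ, derived from the `MvPolynomial` version. -/
lemma multiset_newton (A : Multiset ℚ) (k : ℕ) :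
    (k : ℚ) * A.esymm k = (-1) ^ (k + 1) *
      ∑ a ∈ Finset.HasAntidiagonal.antidiagonal k with a.1 < k,
        (-1) ^ a.1 * A.esymm a.1 * (A.map (fun x => x ^ a.2)).sum := by
  classical
  set l := A.toList with hl
  have hAl : (l : Multiset ℚ) = A := A.coe_toList
  set f : Fin l.length → ℚ := l.get with hf
  have huniv : (Finset.univ.val.map f) = A := by
    rw [Fin.univ_def]
    show ((List.finRange l.length : Multiset (Fin l.length)).map f) = A
    rw [Multiset.map_coe, hf, List.map_get_finRange, hAl]
  have h := congrArg (MvPolynomial.aeval f) (MvPolynomial.mul_esymm_eq_sum (Fin l.length) ℚ k)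
  have hesymm : ∀ j, MvPolynomial.aeval f (MvPolynomial.esymm (Fin l.length) ℚ j)
      = A.esymm j := by
    intro j
    rw [MvPolynomial.aeval_esymm_eq_multiset_esymm, huniv]
  have hpsum : ∀ j, MvPolynomial.aeval f (MvPolynomial.psum (Fin l.length) ℚ j)
      = (A.map (fun x => x ^ j)).sum := by
    intro j
    rw [MvPolynomial.psum, map_sum]
    simp only [map_pow, MvPolynomial.aeval_X]
    rw [← huniv, Multiset.map_map]
    simp [Finset.sum, Function.comp]
  rw [map_mul, map_mul, map_sum, map_pow, map_neg, map_one, hesymm] at h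
  rw [map_natCast (MvPolynomial.aeval f) k] at h
  rw [h]
  congr 1
  refine Finset.sum_congr rfl fun a _ => ?_
  rw [map_mul, map_mul, map_pow, map_neg, map_one, hesymm, hpsum]

lemma esymm_eq_of_psum_eq (m : ℕ) (A B : Multiset ℚ)
    (hp : ∀ k, 1 ≤ k → k ≤ m → (A.map (fun x => x ^ k)).sum = (B.map (fun x => x ^ k)).sum) :
    ∀ k, k ≤ m → A.esymm k = B.esymm k := by
  intro k
  induction k using Nat.strong_induction_on with
  | _ k ih =>
    intro hkm
    rcases Nat.eq_zero_or_pos k with rfl | hk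
    · simp [Multiset.esymm]
    · have h1 := multiset_newton A k
      have h2 := multiset_newton B k
      have hsum : ∑ a ∈ Finset.HasAntidiagonal.antidiagonal k with a.1 < k,
          (-1 : ℚ) ^ a.1 * A.esymm a.1 * (A.map (fun x => x ^ a.2)).sum
          = ∑ a ∈ Finset.HasAntidiagonal.antidiagonal k with a.1 < k,
          (-1 : ℚ) ^ a.1 * B.esymm a.1 * (B.map (fun x => x ^ a.2)).sum := by
        refine Finset.sum_congr rfl fun a ha => ?_
        rw [Finset.mem_filter, Finset.HasAntidiagonal.mem_antidiagonal] at ha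
        have hb1 : 1 ≤ a.2 := by omega
        have hb2 : a.2 ≤ m := by omega
        rw [ih a.1 ha.2 (by omega), hp a.2 hb1 hb2]
      have : (k : ℚ) * A.esymm k = (k : ℚ) * B.esymm k := by rw [h1, h2, hsum]
      exact mul_left_cancel₀ (by exact_mod_cast hk.ne') this

lemma multiset_eq_of_psum_eq (m : ℕ) (A B : Multiset ℚ) (hA : Multiset.card A = m)
    (hB : Multiset.card B = m)
    (hp : ∀ k, 1 ≤ k → k ≤ m → (A.map (fun x => x ^ k)).sum = (B.map (fun x => x ^ k)).sum) :
    A = B := by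
  have hesymm := esymm_eq_of_psum_eq m A B hp
  have hprod : (A.map (fun a => X - C a)).prod = (B.map (fun a => X - C a)).prod := by
    ext j
    rcases le_or_gt j m with hj | hj
    · rw [Multiset.prod_X_sub_C_coeff A (by omega), Multiset.prod_X_sub_C_coeff B (by omega),
        hA, hB, hesymm (m - j) (by omega)]
    · rw [Polynomial.coeff_eq_zero_of_natDegree_lt, Polynomial.coeff_eq_zero_of_natDegree_lt]
      · rw [Polynomial.natDegree_multiset_prod_X_sub_C_eq_card, hB]; exact hj
      · rw [Polynomial.natDegree_multiset_prod_X_sub_C_eq_card, hA]; exact hj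
  have := congrArg Polynomial.roots hprod
  rwa [Polynomial.roots_multiset_prod_X_sub_C, Polynomial.roots_multiset_prod_X_sub_C] at this

/-- The classical size bound for the one-dimensional PTE problem of degree `n`:
a disjoint pair of `m`-element multisets of integers with equal `k`-th power sums
for all `1 ≤ k ≤ n` satisfies `m ≥ n + 1`. -/
theorem pte_size_bound (n m : ℕ) (hm : 0 < m) (s t : Multiset ℤ)
    (hs : Multiset.card s = m) (ht : Multiset.card t = m)
    (hdisj : Disjoint s t)
    (hpow : ∀ k : ℕ, 1 ≤ k → k ≤ n →
      (s.map (fun a => a ^ k)).sum = (t.map (fun a => a ^ k)).sum) :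
    m ≥ n + 1 := by
  by_contra hcon
  push_neg at hcon
  have hmn : m ≤ n := by omega
  set A : Multiset ℚ := s.map (Int.cast : ℤ → ℚ) with hA
  set B : Multiset ℚ := t.map (Int.cast : ℤ → ℚ) with hB
  have hp : ∀ k, 1 ≤ k → k ≤ m →
      (A.map (fun x => x ^ k)).sum = (B.map (fun x => x ^ k)).sum := by
    intro k hk1 hk2
    have h := hpow k hk1 (hk2.trans hmn)
    have hA' : (A.map (fun x => x ^ k)).sum
        = ((Int.castRingHom ℚ) (s.map (fun a => a ^ k)).sum) := by
      rw [map_multiset_sum]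
      simp [hA, Multiset.map_map, Function.comp]
    have hB' : (B.map (fun x => x ^ k)).sum
        = ((Int.castRingHom ℚ) (t.map (fun a => a ^ k)).sum) := by
      rw [map_multiset_sum]
      simp [hB, Multiset.map_map, Function.comp]
    rw [hA', hB', h]
  have hAB : A = B :=
    multiset_eq_of_psum_eq m A B (by simp [hA, hs]) (by simp [hB, ht]) hp
  have hst : s = t := Multiset.map_injective Int.cast_injective hAB
  rw [hst] at hdisj
  have : t = 0 := disjoint_self.mp hdisj
  rw [this] at ht
  simp at ht
  omega
end

section
/- If θ is a rational multiple of 2π and sin θ ∈ ℚ, then sin θ ∈ {0, 1, −1, 1/2, −1/2}; likewise for cos θ. -/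
open Polynomial

lemma exp_integral (z : ℂ) (n : ℕ) (hn : n ≠ 0) (h : z ^ n = 1) : IsIntegral ℤ z := by
  refine ⟨X ^ n - C 1, monic_X_pow_sub_C 1 hn, ?_⟩
  simp [h]

lemma two_cos_integral (q : ℚ) :
    IsIntegral ℤ (2 * Complex.cos ((q : ℂ) * (2 * Real.pi))) := by
  set θ : ℂ := (q : ℂ) * (2 * Real.pi)
  have key : ∀ z : ℂ, z = θ * Complex.I ∨ z = -θ * Complex.I →
      IsIntegral ℤ (Complex.exp z) := by
    intro z hz
    apply exp_integral _ q.den (by exact_mod_cast q.pos.ne')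
    rw [← Complex.exp_nat_mul]
    have hd : ((q.den : ℂ)) * (q : ℂ) = (q.num : ℂ) := by
      have h0 : (q.den : ℚ) * q = (q.num : ℚ) := by
        rw [mul_comm]; exact_mod_cast Rat.mul_den_eq_num q
      exact_mod_cast congrArg (fun x : ℚ => (x : ℂ)) h0
    rcases hz with h | h <;> subst h
    · have : (q.den : ℂ) * (θ * Complex.I) = (q.num : ℂ) * (2 * Real.pi * Complex.I) := by
        simp only [θ]; rw [show (q.den : ℂ) * ((q : ℂ) * (2 * Real.pi) * Complex.I)
          = ((q.den : ℂ) * (q : ℂ)) * (2 * Real.pi * Complex.I) by ring, hd]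
      rw [this, Complex.exp_int_mul_two_pi_mul_I]
    · have : (q.den : ℂ) * (-θ * Complex.I) = (-q.num : ℂ) * (2 * Real.pi * Complex.I) := by
        simp only [θ]; rw [show (q.den : ℂ) * (-((q : ℂ) * (2 * Real.pi)) * Complex.I)
          = -((q.den : ℂ) * (q : ℂ)) * (2 * Real.pi * Complex.I) by ring, hd]
      rw [this]
      exact_mod_cast Complex.exp_int_mul_two_pi_mul_I (-q.num)
  rw [Complex.two_cos]
  exact (key _ (Or.inl rfl)).add (key _ (Or.inr rfl))

lemma cos_key (q c : ℚ) (h : Real.cos ((q : ℝ) * (2 * Real.pi)) = (c : ℝ)) :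
    (c : ℝ) ∈ ({0, 1, -1, 1/2, -1/2} : Set ℝ) := by
  have hint : IsIntegral ℤ ((2 * c : ℚ) : ℂ) := by
    have := two_cos_integral q
    have hc : (2 * Complex.cos ((q : ℂ) * (2 * Real.pi))) = ((2 * c : ℚ) : ℂ) := by
      have h1 : (q : ℂ) * (2 * (Real.pi : ℂ)) = (((q : ℝ) * (2 * Real.pi) : ℝ) : ℂ) := by
        push_cast; ring
      rw [h1, ← Complex.ofReal_cos, h]
      push_cast; ring
    rwa [hc] at this
  have hratint : IsIntegral ℤ (2 * c : ℚ) := by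
    rwa [show ((2 * c : ℚ) : ℂ) = algebraMap ℚ ℂ (2 * c) from rfl,
      isIntegral_algebraMap_iff (algebraMap ℚ ℂ).injective] at hint
  obtain ⟨m, hm⟩ := IsIntegrallyClosed.isIntegral_iff.mp hratint
  have hm' : (m : ℚ) = 2 * c := hm
  have hb : |(c : ℝ)| ≤ 1 := by rw [← h]; exact Real.abs_cos_le_one _
  have hb' : |c| ≤ 1 := by
    rwa [show |(c : ℝ)| = ((|c| : ℚ) : ℝ) by push_cast; rfl, show (1:ℝ) = ((1:ℚ):ℝ) by norm_num,
      Rat.cast_le] at hb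
  have hmb : |m| ≤ 2 := by
    have h2 : |(m : ℚ)| ≤ 2 := by
      rw [hm', abs_mul, abs_two]; nlinarith [abs_nonneg c]
    rwa [← Int.cast_abs, show (2 : ℚ) = ((2 : ℤ) : ℚ) by norm_num, Int.cast_le] at h2
  have hc : c = (m : ℚ) / 2 := by rw [hm']; ring
  obtain ⟨hl, hr⟩ := abs_le.mp hmb
  interval_cases m <;> rw [hc] <;> push_cast <;> norm_num [Set.mem_insert_iff]

namespace NivenTheorem

/-- Niven's theorem: if `θ` is a rational multiple of `2π` then a rational value of
`sin θ` (resp. `cos θ`) must lie in `{0, ±1, ±1/2}`. -/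
theorem niven (θ : ℝ) (hθ : ∃ q : ℚ, θ = (q : ℝ) * (2 * Real.pi)) :
    ((∃ s : ℚ, Real.sin θ = (s : ℝ)) →
      Real.sin θ ∈ ({0, 1, -1, 1/2, -1/2} : Set ℝ)) ∧
    ((∃ c : ℚ, Real.cos θ = (c : ℝ)) →
      Real.cos θ ∈ ({0, 1, -1, 1/2, -1/2} : Set ℝ)) := by
  obtain ⟨q, rfl⟩ := hθ
  constructor
  · rintro ⟨s, hs⟩
    have h : Real.cos (((1/4 - q : ℚ) : ℝ) * (2 * Real.pi)) = (s : ℝ) := by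
      have : ((1/4 - q : ℚ) : ℝ) * (2 * Real.pi) = Real.pi / 2 - (q : ℝ) * (2 * Real.pi) := by
        push_cast; ring
      rw [this, Real.cos_pi_div_two_sub, hs]
    rw [hs]; exact cos_key _ _ h
  · rintro ⟨c, hc⟩
    rw [hc]; exact cos_key q c hc

end NivenTheorem
end

section
/- For all rationals z₁, z₂ (with the square roots interpreted in ℂ), the multisets {z₁, (−z₁−3+√(−3z₁²−6z₁−5))/2, (−z₁−3−√(−3z₁²−6z₁−5))/2} and {z₂, (−z₂−3+√(−3z₂²−6z₂−5))/2, (−z₂−3−√(−3z₂²−6z₂−5))/2} have equal power sums of orders 1 and 2; specifically, each multiset has power sum −3 of order 1 and 2 of order 2. -/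
/-- A parametric ideal solution of degree 2 of the PTE problem over imaginary
quadratic fields: for any rationals `z₁, z₂` and square roots `w₁, w₂` of
`−3zᵢ²−6zᵢ−5` in `ℂ`, the corresponding triples have equal power sums of orders
1 and 2; specifically each has first power sum `−3` and second power sum `2`. -/
theorem bessel_pte_degree_two (z₁ z₂ : ℚ) (w₁ w₂ : ℂ)
    (hw₁ : w₁ ^ 2 = -3 * (z₁ : ℂ)^2 - 6 * (z₁ : ℂ) - 5)
    (hw₂ : w₂ ^ 2 = -3 * (z₂ : ℂ)^2 - 6 * (z₂ : ℂ) - 5) :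
    ((z₁ : ℂ) + (-(z₁ : ℂ) - 3 + w₁)/2 + (-(z₁ : ℂ) - 3 - w₁)/2 = -3 ∧
     (z₁ : ℂ)^2 + ((-(z₁ : ℂ) - 3 + w₁)/2)^2 + ((-(z₁ : ℂ) - 3 - w₁)/2)^2 = 2) ∧
    ((z₂ : ℂ) + (-(z₂ : ℂ) - 3 + w₂)/2 + (-(z₂ : ℂ) - 3 - w₂)/2 = -3 ∧
     (z₂ : ℂ)^2 + ((-(z₂ : ℂ) - 3 + w₂)/2)^2 + ((-(z₂ : ℂ) - 3 - w₂)/2)^2 = 2) ∧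
    ((z₁ : ℂ) + (-(z₁ : ℂ) - 3 + w₁)/2 + (-(z₁ : ℂ) - 3 - w₁)/2 =
      (z₂ : ℂ) + (-(z₂ : ℂ) - 3 + w₂)/2 + (-(z₂ : ℂ) - 3 - w₂)/2) ∧
    ((z₁ : ℂ)^2 + ((-(z₁ : ℂ) - 3 + w₁)/2)^2 + ((-(z₁ : ℂ) - 3 - w₁)/2)^2 =
      (z₂ : ℂ)^2 + ((-(z₂ : ℂ) - 3 + w₂)/2)^2 + ((-(z₂ : ℂ) - 3 - w₂)/2)^2) := by
  have h1 : ∀ (z w : ℂ), w ^ 2 = -3 * z^2 - 6 * z - 5 →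
      z + (-z - 3 + w)/2 + (-z - 3 - w)/2 = -3 ∧
      z^2 + ((-z - 3 + w)/2)^2 + ((-z - 3 - w)/2)^2 = 2 := by
    intro z w hw
    constructor
    · ring
    · field_simp
      ring_nf
      rw [hw]
      ring
  obtain ⟨a1, a2⟩ := h1 _ _ hw₁
  obtain ⟨b1, b2⟩ := h1 _ _ hw₂
  exact ⟨⟨a1, a2⟩, ⟨b1, b2⟩, by rw [a1, b1], by rw [a2, b2]⟩
end
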